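/- Let M be an additive commutative monoid, let r ≥ 1, let t_1,…,t_{r+1} ∈ M, and let 1 ≤ i ≤ r+1. Then, as multisets of lists with entries in M, ∑_{σ ∈ 𝒫(r+1,i)} {[t_{σ⁻¹(1)},…,t_{σ⁻¹(i)}]} = ∑_{j=1}^{i} ( ∑_{τ ∈ 𝒫(r,i-1)} {[t_{τ⁻¹(1)},…,t_{τ⁻¹(j-1)}, t_{r+1}, t_{τ⁻¹(j)},…,t_{τ⁻¹(i-1)}]} + ∑_{τ ∈ 𝒫(r,i)} {[t_{τ⁻¹(1)},…,t_{τ⁻¹(j-1)}, t_{r+1} + t_{τ⁻¹(j)}, t_{τ⁻¹(j+1)},…,t_{τ⁻¹(i)}]} ), where for τ ∈ 𝒫(r,·) the sums t_{τ⁻¹(k)} involve only t_1,…,t_r, and where 𝒫(r,0) and 𝒫(r,r+1) are interpreted as empty sets. -/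

import Mathlib

open scoped BigOperators

/-- The quasi-shuffle (harmonic) product of two words. -/
def qs {M : Type*} [AddCommMonoid M] : List M → List M → Multiset (List M)
  | [], w => {w}
  | a :: u, [] => {a :: u}
  | a :: u, b :: v =>
      (qs u (b :: v)).map (a :: ·) + (qs (a :: u) v).map (b :: ·) +
        (qs u v).map (fun w => (a + b) :: w)
termination_by u v => u.length + v.length
decreasing_by all_goals (simp; try omega)

/-- `𝒫 r i`: surjections from `Fin r` onto `Fin i`. -/
def Psurj (r i : ℕ) : Finset (Fin r → Fin i) :=
  Finset.univ.filter Function.Surjective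

/-- The word `[t_{σ⁻¹(1)}, …, t_{σ⁻¹(i)}]`. -/
def wordOf {M : Type*} [AddCommMonoid M] {r i : ℕ} (t : Fin r → M) (σ : Fin r → Fin i) :
    List M :=
  List.ofFn fun k : Fin i => ∑ n ∈ Finset.univ.filter (fun n => σ n = k), t n

open Finset Function

theorem myOfFn_insertNth {α : Type*} : ∀ {n : ℕ} (j : Fin (n+1)) (a : α) (g : Fin n → α),
    List.ofFn (Fin.insertNth j a g) = (List.ofFn g).insertIdx j a := by
  intro n
  induction n with
  | zero =>
    intro j a g
    fin_cases j
    simp [Fin.insertNth_zero', List.ofFn_succ]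
  | succ n ih =>
    intro j a g
    induction j using Fin.cases with
    | zero => simp [Fin.insertNth_zero', List.ofFn_succ]
    | succ q =>
      have h1 : (fun i : Fin (n+1) => Fin.insertNth (α := fun _ => α) q.succ a g i.succ)
          = Fin.insertNth (α := fun _ => α) q a (fun x => g x.succ) := by
        refine funext (Fin.succAboveCases q ?_ ?_)
        · simp [Fin.insertNth_apply_same, Fin.succ_succAbove_succ]
        · intro m
          rw [Fin.insertNth_apply_succAbove, ← Fin.succ_succAbove_succ,
            Fin.insertNth_apply_succAbove]
      have h0 : Fin.insertNth (α := fun _ => α) q.succ a g 0 = g 0 := by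
        rw [← Fin.succ_succAbove_zero q, Fin.insertNth_apply_succAbove]
      conv_lhs => rw [List.ofFn_succ, h0, h1, ih]
      conv_rhs => rw [List.ofFn_succ]
      rw [Fin.val_succ, List.insertIdx_succ_cons]

section
variable {M : Type*} [AddCommMonoid M] {r i' : ℕ}

theorem wordA (t : Fin (r+1) → M) (j : Fin (i'+1)) (τ : Fin r → Fin i') :
    wordOf t (Fin.snoc (fun n => j.succAbove (τ n)) j) =
      (wordOf (fun n : Fin r => t n.castSucc) τ).insertIdx j (t (Fin.last r)) := by
  unfold wordOf
  rw [← myOfFn_insertNth]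
  congr 1
  refine funext (Fin.succAboveCases j ?_ ?_)
  · rw [Fin.insertNth_apply_same]
    rw [Finset.sum_filter, Fin.sum_univ_castSucc]
    simp [Fin.succAbove_ne j]
  · intro m
    rw [Fin.insertNth_apply_succAbove]
    rw [Finset.sum_filter, Fin.sum_univ_castSucc]
    simp only [Fin.snoc_castSucc, Fin.snoc_last]
    rw [← Finset.sum_filter]
    simp [Fin.succAbove_right_injective.eq_iff, (Fin.succAbove_ne j m).symm]

theorem wordB (t : Fin (r+1) → M) (j : Fin (i'+1)) (τ : Fin r → Fin (i'+1)) :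
    wordOf t (Fin.snoc τ j) = List.ofFn fun k : Fin (i'+1) =>
      if k = j then t (Fin.last r) + ∑ n ∈ univ.filter (fun n => τ n = k), t n.castSucc
      else ∑ n ∈ univ.filter (fun n => τ n = k), t n.castSucc := by
  unfold wordOf
  congr 1
  funext k
  rw [Finset.sum_filter, Fin.sum_univ_castSucc]
  simp only [Fin.snoc_castSucc, Fin.snoc_last]
  rw [← Finset.sum_filter]
  by_cases h : k = j
  · subst h; simp [add_comm]
  · simp [h, Ne.symm h]

theorem sum_word_surj_succ' (t : Fin (r + 1) → M) :
    (∑ σ ∈ Psurj (r + 1) (i'+1), ({wordOf t σ} : Multiset (List M))) =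
      ∑ j : Fin (i'+1),
        ((∑ τ ∈ Psurj r i',
            ({(wordOf (fun n : Fin r => t n.castSucc) τ).insertIdx j (t (Fin.last r))} :
              Multiset (List M))) +
          ∑ τ ∈ Psurj r (i'+1),
            ({List.ofFn fun k : Fin (i'+1) =>
                if k = j then
                  t (Fin.last r) + ∑ n ∈ Finset.univ.filter (fun n => τ n = k), t n.castSucc
                else ∑ n ∈ Finset.univ.filter (fun n => τ n = k), t n.castSucc} :
              Multiset (List M))) := by
  classical
  rw [← Finset.sum_fiberwise (Psurj (r + 1) (i' + 1)) (fun σ => σ (Fin.last r))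
    (fun σ => ({wordOf t σ} : Multiset (List M)))]
  refine Finset.sum_congr rfl fun j _ => ?_
  rw [← Finset.sum_filter_add_sum_filter_not
    ((Psurj (r + 1) (i' + 1)).filter fun σ => σ (Fin.last r) = j)
    (fun σ => ¬ Function.Surjective (fun n : Fin r => σ n.castSucc))]
  congr 1
  · -- case A : restriction not surjective ↔ insert t_{r+1} as new letter
    refine (Finset.sum_bij
      (fun (τ : Fin r → Fin i') _ =>
        (Fin.snoc (fun n => j.succAbove (τ n)) j : Fin (r+1) → Fin (i'+1)))
      ?_ ?_ ?_ ?_).symm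
    · -- maps into the filter set
      intro τ hτ
      have hτs : Surjective τ := by simpa [Psurj] using hτ
      simp only [mem_filter, Psurj, Finset.mem_univ, true_and]
      refine ⟨⟨?_, by simp⟩, ?_⟩
      · -- surjectivity of snoc
        intro k
        by_cases hk : k = j
        · exact ⟨Fin.last r, by simp [hk]⟩
        · obtain ⟨m, hm⟩ := Fin.exists_succAbove_eq (Ne.intro hk)
          obtain ⟨n, hn⟩ := hτs m
          exact ⟨n.castSucc, by simp [hn, hm]⟩
      · -- restriction not surjective
        intro hs
        obtain ⟨n, hn⟩ := hs j
        simp only [Fin.snoc_castSucc] at hn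
        exact Fin.succAbove_ne j (τ n) hn
    · -- injective
      intro τ₁ h₁ τ₂ h₂ heq
      funext n
      have := congrFun heq n.castSucc
      simp only [Fin.snoc_castSucc] at this
      exact Fin.succAbove_right_injective this
    · -- surjective
      intro σ hσ
      simp only [mem_filter, Psurj, Finset.mem_univ, true_and] at hσ
      obtain ⟨⟨hσs, hlast⟩, hns⟩ := hσ
      have hne : ∀ n : Fin r, σ n.castSucc ≠ j := by
        intro n hn
        apply hns
        intro k
        obtain ⟨m, hm⟩ := hσs k
        rcases eq_or_ne m (Fin.last r) with rfl | hm'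
        · exact ⟨n, by simp only []; rw [hn, ← hlast, hm]⟩
        · obtain ⟨m', rfl⟩ := Fin.exists_castSucc_eq.mpr hm'
          exact ⟨m', hm⟩
      set τ : Fin r → Fin i' := fun n => Classical.choose (Fin.exists_succAbove_eq (hne n))
        with hτdef
      have hspec : ∀ n, j.succAbove (τ n) = σ n.castSucc :=
        fun n => Classical.choose_spec (Fin.exists_succAbove_eq (hne n))
      have hσeq : (Fin.snoc (fun n => j.succAbove (τ n)) j : Fin (r+1) → Fin (i'+1)) = σ := by
        funext m
        induction m using Fin.lastCases with
        | last => simp [hlast]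
        | cast n => simp [hspec n]
      refine ⟨τ, ?_, hσeq⟩
      simp only [Psurj, Finset.mem_filter, Finset.mem_univ, true_and]
      intro m
      obtain ⟨n, hn⟩ := hσs (j.succAbove m)
      have hn' : n ≠ Fin.last r := by
        intro h; rw [h, hlast] at hn; exact Fin.succAbove_ne j m hn.symm
      obtain ⟨n', rfl⟩ := Fin.exists_castSucc_eq.mpr hn'
      exact ⟨n', Fin.succAbove_right_injective ((hspec n').trans hn)⟩
    · -- words agree
      intro τ hτ
      rw [wordA]
  · -- case B : restriction surjective ↔ add t_{r+1} to a letter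
    refine (Finset.sum_bij
      (fun (τ : Fin r → Fin (i'+1)) _ => (Fin.snoc τ j : Fin (r+1) → Fin (i'+1)))
      ?_ ?_ ?_ ?_).symm
    · intro τ hτ
      have hτs : Surjective τ := by simpa [Psurj] using hτ
      simp only [mem_filter, Psurj, Finset.mem_univ, true_and, not_not]
      refine ⟨⟨?_, by simp⟩, ?_⟩
      · intro k
        obtain ⟨n, hn⟩ := hτs k
        exact ⟨n.castSucc, by simp [hn]⟩
      · intro k
        obtain ⟨n, hn⟩ := hτs k
        exact ⟨n, by simp [hn]⟩
    · intro τ₁ h₁ τ₂ h₂ heq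
      funext n
      have := congrFun heq n.castSucc
      simpa using this
    · intro σ hσ
      simp only [mem_filter, Psurj, Finset.mem_univ, true_and, not_not] at hσ
      obtain ⟨⟨hσs, hlast⟩, hrs⟩ := hσ
      refine ⟨fun n => σ n.castSucc, ?_, ?_⟩
      · simpa [Psurj] using hrs
      · funext m
        induction m using Fin.lastCases with
        | last => simp [hlast]
        | cast n => simp
    · intro τ hτ
      rw [wordB]

end

/-- Key combinatorial lemma (Lemma 3.3 of the paper): for `1 ≤ i ≤ r+1`, the multiset of words
`[t_{σ⁻¹(1)},…,t_{σ⁻¹(i)}]` over surjections `σ ∈ 𝒫(r+1,i)` decomposes according to the position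
of `t_{r+1}`: one either inserts `t_{r+1}` as a new letter at one of the `i` places of a word
coming from `τ ∈ 𝒫(r,i-1)`, or adds `t_{r+1}` to one of the `i` letters of a word coming from
`τ ∈ 𝒫(r,i)`.  (Here `𝒫(r,0)` and `𝒫(r,r+1)` are empty.) -/
theorem sum_word_surj_succ {M : Type*} [AddCommMonoid M] (r i : ℕ) (hr : 1 ≤ r)
    (hi1 : 1 ≤ i) (hi2 : i ≤ r + 1) (t : Fin (r + 1) → M) :
    (∑ σ ∈ Psurj (r + 1) i, ({wordOf t σ} : Multiset (List M))) =
      ∑ j : Fin i,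
        ((∑ τ ∈ Psurj r (i - 1),
            ({(wordOf (fun n : Fin r => t n.castSucc) τ).insertIdx j (t (Fin.last r))} :
              Multiset (List M))) +
          ∑ τ ∈ Psurj r i,
            ({List.ofFn fun k : Fin i =>
                if k = j then
                  t (Fin.last r) + ∑ n ∈ Finset.univ.filter (fun n => τ n = k), t n.castSucc
                else ∑ n ∈ Finset.univ.filter (fun n => τ n = k), t n.castSucc} :
              Multiset (List M))) := by
  obtain ⟨i', rfl⟩ : ∃ i', i = i' + 1 := ⟨i - 1, (Nat.succ_pred_eq_of_pos hi1).symm⟩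
  exact sum_word_surj_succ' t
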